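/- Let k be a field of characteristic p > 0 and n ≥ 2. On k[u₁, …, uₙ] consider the derivation ψ = u₁·∂/∂u₁ + Σ_{i=2}^{n} (−uᵢ + uᵢ²)·∂/∂uᵢ. Then ψ^[p] = ψ. -/

import Mathlib

open Finset
open Polynomial
noncomputable def Bc (m l : ℕ) : ℤ := ∑ j ∈ Finset.range (l+1), (-1:ℤ)^(l+j) * (l.choose j) * (j:ℤ)^m

lemma Bc_rec (m l : ℕ) : Bc (m+1) (l+1) = (l+1 : ℤ) * (Bc m (l+1) + Bc m l) := by
  have peel : ∀ M : ℕ, Bc M (l+1) =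
      (∑ j ∈ range (l+1), (-1:ℤ)^(l+j) * ((l+1).choose (j+1)) * ((j:ℤ)+1)^M)
        + (-1:ℤ)^(l+1) * (0:ℤ)^M := by
    intro M
    rw [Bc, Finset.sum_range_succ']
    congr 1
    · exact Finset.sum_congr rfl fun j _ => by push_cast; ring
    · simp
  have peel0 : Bc m l =
      (∑ j ∈ range l, (-1:ℤ)^(l+j+1) * (l.choose (j+1)) * ((j:ℤ)+1)^m)
        + (-1:ℤ)^l * (0:ℤ)^m := by
    rw [Bc, Finset.sum_range_succ']
    congr 1
    simp
  have ext0 : (∑ j ∈ range l, (-1:ℤ)^(l+j+1) * (l.choose (j+1)) * ((j:ℤ)+1)^m)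
      = ∑ j ∈ range (l+1), (-1:ℤ)^(l+j+1) * (l.choose (j+1)) * ((j:ℤ)+1)^m := by
    rw [Finset.sum_range_succ, Nat.choose_succ_self]
    push_cast; ring
  have main : (∑ j ∈ range (l+1), (-1:ℤ)^(l+j) * ((l+1).choose (j+1)) * ((j:ℤ)+1)^(m+1))
      = ((l:ℤ)+1) * (∑ j ∈ range (l+1), ((-1:ℤ)^(l+j) * ((l+1).choose (j+1)) * ((j:ℤ)+1)^m
          + (-1:ℤ)^(l+j+1) * (l.choose (j+1)) * ((j:ℤ)+1)^m)) := by
    rw [Finset.mul_sum]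
    refine Finset.sum_congr rfl fun j _ => ?_
    have hkey : ((l+1).choose (j+1) : ℤ) * ((j:ℤ)+1) = ((l:ℤ)+1) * (l.choose j : ℤ) := by
      exact_mod_cast (Nat.add_one_mul_choose_eq l j).symm
    have ha : ((l+1).choose (j+1) : ℤ) = (l.choose j : ℤ) + (l.choose (j+1) : ℤ) := by
      exact_mod_cast Nat.choose_succ_succ (l) (j)
    linear_combination ((-1:ℤ)^(l+j) * ((j:ℤ)+1)^m) * hkey
      - (((l:ℤ)+1) * ((-1:ℤ)^(l+j) * ((j:ℤ)+1)^m)) * ha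
  rw [peel (m+1), peel m, peel0, ext0, zero_pow (Nat.succ_ne_zero m), mul_zero, add_zero, main,
    Finset.sum_add_distrib]
  push_cast
  ring

lemma Bc_zero_of_pos (l : ℕ) (hl : l ≠ 0) : Bc 0 l = 0 := by
  have h := Int.alternating_sum_range_choose_of_ne hl
  rw [Bc]
  calc (∑ j ∈ range (l+1), (-1:ℤ)^(l+j) * (l.choose j) * (j:ℤ)^0)
      = (-1:ℤ)^l * ∑ j ∈ range (l+1), (-1:ℤ)^j * (l.choose j) := by
        rw [Finset.mul_sum]
        exact Finset.sum_congr rfl fun j _ => by rw [pow_add]; ring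
    _ = 0 := by rw [h, mul_zero]

lemma Bc_high : ∀ m l, m < l → Bc m l = 0
  | 0, l, h => Bc_zero_of_pos l (by omega)
  | (m+1), l, h => by
      obtain ⟨l', rfl⟩ : ∃ l', l = l'+1 := ⟨l-1, by omega⟩
      rw [Bc_rec, Bc_high m (l'+1) (by omega), Bc_high m l' (by omega), add_zero, mul_zero]

section SingleVar
variable {A : Type*} [CommRing A]

/-- `g l = X (X-1)^l`. -/
noncomputable def gP (l : ℕ) : A[X] := X * (X - 1)^l

/-- The derivation `(X^2 - X) d/dX`. -/
noncomputable def Dt (f : A[X]) : A[X] := (X^2 - X) * derivative f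

lemma Dt_g (l : ℕ) : Dt (gP l : A[X])
    = ((l:A[X])+1) * gP (l+1) + (l:A[X]) * gP l := by
  cases l with
  | zero => simp [Dt, gP]; ring
  | succ l =>
    unfold Dt gP
    rw [derivative_mul, derivative_X, derivative_pow_succ, derivative_sub, derivative_X,
      derivative_one]
    simp only [C_add, C_1, map_natCast]
    push_cast
    rw [pow_succ ((X:A[X]) - 1) (l+1), pow_succ ((X:A[X]) - 1) l]
    ring

lemma Dt_sum {s : Finset ℕ} {F : ℕ → A[X]} : Dt (∑ l ∈ s, F l) = ∑ l ∈ s, Dt (F l) := by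
  unfold Dt
  rw [derivative_sum, Finset.mul_sum]

lemma Dt_intCast_mul (z : ℤ) (f : A[X]) : Dt ((z : A[X]) * f) = (z : A[X]) * Dt f := by
  unfold Dt
  rw [← map_intCast (Polynomial.C : A →+* A[X]) z, derivative_C_mul]
  ring

lemma Dt_iter (m : ℕ) : Dt^[m+1] (X : A[X])
    = ∑ l ∈ range (m+2), ((Bc (m+1) l : ℤ) : A[X]) * gP l := by
  induction m with
  | zero =>
    rw [Function.iterate_one]
    rw [show range 2 = {0, 1} from rfl]
    rw [Finset.sum_insert (by decide), Finset.sum_singleton]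
    rw [show Bc 1 0 = 0 from by decide, show Bc 1 1 = 1 from by decide]
    simp [Dt, gP]
    ring
  | succ m IH =>
    rw [Function.iterate_succ_apply', IH, Dt_sum]
    have step : ∀ l ∈ range (m+2), Dt (((Bc (m+1) l : ℤ) : A[X]) * gP l)
        = ((Bc (m+1) l : ℤ) : A[X]) * (((l:A[X])+1) * gP (l+1) + (l:A[X]) * gP l) := by
      intro l _
      rw [Dt_intCast_mul, Dt_g]
    rw [Finset.sum_congr rfl step]
    -- split into two sums
    have split : ∑ l ∈ range (m+2), ((Bc (m+1) l : ℤ) : A[X]) * (((l:A[X])+1) * gP (l+1) + (l:A[X]) * gP l)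
        = (∑ l ∈ range (m+2), ((Bc (m+1) l : ℤ) : A[X]) * ((l:A[X])+1) * gP (l+1))
          + ∑ l ∈ range (m+2), ((Bc (m+1) l : ℤ) : A[X]) * (l:A[X]) * gP l := by
      rw [← Finset.sum_add_distrib]
      exact Finset.sum_congr rfl fun l _ => by ring
    rw [split]
    -- second sum: peel l = 0 (term zero), reindex
    have second : ∑ l ∈ range (m+2), ((Bc (m+1) l : ℤ) : A[X]) * (l:A[X]) * gP l
        = ∑ l ∈ range (m+1), ((Bc (m+1) (l+1) : ℤ) : A[X]) * ((l:A[X])+1) * gP (l+1) := by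
      rw [Finset.sum_range_succ' _ (m+1)]
      push_cast
      simp
    -- RHS: peel l = 0 (term zero since Bc (m+2) 0 = 0)
    rw [Finset.sum_range_succ' _ (m+2)]
    have h0 : ((Bc (m+2) 0 : ℤ) : A[X]) * gP 0 = 0 := by
      rw [show Bc (m+2) 0 = 0 from by simp [Bc], Int.cast_zero, zero_mul]
    rw [h0, add_zero]
    -- use the recurrence on each RHS term
    have rec' : ∀ l ∈ range (m+2), ((Bc (m+2) (l+1) : ℤ) : A[X]) * gP (l+1)
        = ((Bc (m+1) (l+1) : ℤ) : A[X]) * ((l:A[X])+1) * gP (l+1)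
          + ((Bc (m+1) l : ℤ) : A[X]) * ((l:A[X])+1) * gP (l+1) := by
      intro l _
      rw [Bc_rec]
      push_cast
      ring
    rw [Finset.sum_congr rfl rec', Finset.sum_add_distrib, second]
    -- first RHS sum: extend range (m+1) to (m+2) using Bc (m+1) (m+2) = 0
    have ext : ∑ l ∈ range (m+2), ((Bc (m+1) (l+1) : ℤ) : A[X]) * ((l:A[X])+1) * gP (l+1)
        = ∑ l ∈ range (m+1), ((Bc (m+1) (l+1) : ℤ) : A[X]) * ((l:A[X])+1) * gP (l+1) := by
      rw [Finset.sum_range_succ, Bc_high (m+1) (m+2) (by omega), Int.cast_zero, zero_mul,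
        zero_mul, add_zero]
    rw [ext]
    ring

end SingleVar

lemma Dt_prime {k : Type*} [Field k] (p : ℕ) [Fact p.Prime] [CharP k p] :
    Dt^[p] (X : k[X]) = X^2 - X := by
  haveI : CharP (Polynomial k) p := charP_of_injective_algebraMap' k p
  have hco : ∀ l, ((Bc p l : ℤ) : k[X]) = ((Bc 1 l : ℤ) : k[X]) := by
    intro l
    have hz : ((Bc p l - Bc 1 l : ℤ) : ZMod p) = 0 := by
      push_cast [Bc]
      rw [← Finset.sum_sub_distrib]
      refine Finset.sum_eq_zero fun j _ => ?_
      rw [ZMod.pow_card]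
      ring
    have hdvd : ((p : ℕ) : ℤ) ∣ (Bc p l - Bc 1 l) :=
      (ZMod.intCast_zmod_eq_zero_iff_dvd _ p).mp hz
    have h0 := (CharP.intCast_eq_zero_iff (k[X]) p (Bc p l - Bc 1 l)).mpr hdvd
    rw [Int.cast_sub] at h0
    exact sub_eq_zero.mp h0
  obtain ⟨m, rfl⟩ := Nat.exists_eq_succ_of_ne_zero (Nat.Prime.ne_zero (Fact.out : p.Prime))
  rw [Dt_iter m]
  rw [Finset.sum_congr rfl (fun l _ => by rw [hco l])]
  rw [Finset.sum_eq_single_of_mem 1 (Finset.mem_range.mpr (by omega))]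
  · rw [show Bc 1 1 = 1 from by decide, Int.cast_one, one_mul]
    simp only [gP]
    ring
  · intro l _ hne
    match l, hne with
    | 0, _ => rw [show Bc 1 0 = 0 from by decide, Int.cast_zero, zero_mul]
    | (l+2), _ => rw [Bc_high 1 (l+2) (by omega), Int.cast_zero, zero_mul]
    | 1, h => exact absurd rfl h

section MV

open MvPolynomial
variable {k : Type*} [CommRing k] {n : ℕ}

noncomputable def psi (g : MvPolynomial (Fin (n+2)) k) : MvPolynomial (Fin (n+2)) k :=
  ∑ i, (if i = 0 then X i else -X i + X i ^ 2) * pderiv i g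

lemma psi_zero : psi (0 : MvPolynomial (Fin (n+2)) k) = 0 := by simp [psi]

lemma psi_C (a : k) : psi (C a : MvPolynomial (Fin (n+2)) k) = 0 := by simp [psi]

lemma psi_add (a b : MvPolynomial (Fin (n+2)) k) : psi (a + b) = psi a + psi b := by
  simp [psi, mul_add, Finset.sum_add_distrib]

lemma psi_sum {ι : Type*} (s : Finset ι) (F : ι → MvPolynomial (Fin (n+2)) k) :
    psi (∑ x ∈ s, F x) = ∑ x ∈ s, psi (F x) := by
  classical
  induction s using Finset.cons_induction with
  | empty => simp [psi]
  | cons a s ha IH => rw [Finset.sum_cons, psi_add, IH, Finset.sum_cons]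

lemma psi_mul (a b : MvPolynomial (Fin (n+2)) k) : psi (a * b) = a * psi b + b * psi a := by
  unfold psi
  rw [Finset.mul_sum, Finset.mul_sum, ← Finset.sum_add_distrib]
  refine Finset.sum_congr rfl fun i _ => ?_
  rw [pderiv_mul]
  ring

lemma psi_nsmul (c : ℕ) (a : MvPolynomial (Fin (n+2)) k) : psi (c • a) = c • psi a := by
  rw [nsmul_eq_mul, nsmul_eq_mul, ← map_natCast (C : k →+* MvPolynomial (Fin (n+2)) k) c,
    psi_mul, psi_C, mul_zero, add_zero]

lemma psi_iter_zero (m : ℕ) : psi^[m] (0 : MvPolynomial (Fin (n+2)) k) = 0 := by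
  induction m with
  | zero => rfl
  | succ m IH => rw [Function.iterate_succ_apply, psi_zero, IH]

lemma psi_iter_add (m : ℕ) (a b : MvPolynomial (Fin (n+2)) k) :
    psi^[m] (a + b) = psi^[m] a + psi^[m] b := by
  induction m generalizing a b with
  | zero => rfl
  | succ m IH => rw [Function.iterate_succ_apply, psi_add, IH,
      Function.iterate_succ_apply, Function.iterate_succ_apply]

lemma psi_iter_mul (m : ℕ) (a b : MvPolynomial (Fin (n+2)) k) :
    psi^[m] (a * b) = ∑ j ∈ range (m+1), m.choose j • (psi^[m-j] a * psi^[j] b) := by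
  induction m with
  | zero => simp [Finset.range]
  | succ m IH =>
    calc
      psi^[m+1] (a * b) =
          psi (∑ j ∈ range (m+1), m.choose j • (psi^[m-j] a * psi^[j] b)) := by
        rw [Function.iterate_succ_apply', IH]
      _ = (∑ j ∈ range (m+1), m.choose j • (psi^[m-j+1] a * psi^[j] b)) +
          ∑ j ∈ range (m+1), m.choose j • (psi^[m-j] a * psi^[j+1] b) := by
        rw [psi_sum, ← Finset.sum_add_distrib]
        refine Finset.sum_congr rfl fun j _ => ?_
        rw [psi_nsmul, psi_mul, smul_add, Function.iterate_succ_apply' psi (m-j),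
          Function.iterate_succ_apply' psi j]
        ring
      _ = (∑ j ∈ range (m+1), m.choose (j+1) • (psi^[m-j] a * psi^[j+1] b)) +
              1 • (psi^[m+1] a * psi^[0] b) +
            ∑ j ∈ range (m+1), m.choose j • (psi^[m-j] a * psi^[j+1] b) := ?_
      _ = ((∑ j ∈ range (m+1), m.choose j • (psi^[m-j] a * psi^[j+1] b)) +
              ∑ j ∈ range (m+1), m.choose (j+1) • (psi^[m-j] a * psi^[j+1] b)) +
            1 • (psi^[m+1] a * psi^[0] b) := by
        abel
      _ = (∑ j ∈ range (m+1),
              (m + 1).choose (j + 1) • (psi^[m+1-(j+1)] a * psi^[j+1] b)) +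
            1 • (psi^[m+1] a * psi^[0] b) := by
        simp_rw [Nat.choose_succ_succ, Nat.succ_sub_succ, add_smul, sum_add_distrib]
      _ = ∑ j ∈ range (m+2), (m+1).choose j • (psi^[m+1-j] a * psi^[j] b) := by
        rw [sum_range_succ' _ (m+1), Nat.choose_zero_right, tsub_zero]
    congr
    refine (sum_range_succ' _ _).trans (congr_arg₂ (· + ·) ?_ ?_)
    · rw [sum_range_succ, Nat.choose_succ_self, zero_smul, add_zero]
      refine sum_congr rfl fun j hj => ?_
      rw [mem_range] at hj
      congr
      omega
    · rw [Nat.choose_zero_right, tsub_zero]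


lemma pderiv_aeval (i j : Fin (n+2)) (f : Polynomial k) :
    pderiv j (Polynomial.aeval (X i : MvPolynomial (Fin (n+2)) k) f)
      = if j = i then Polynomial.aeval (X i : MvPolynomial (Fin (n+2)) k) (derivative f) else 0 := by
  induction f using Polynomial.induction_on with
  | C a => simp [Polynomial.aeval_C, MvPolynomial.algebraMap_eq]
  | add f g hf hg => simp only [map_add, hf, hg]; split_ifs <;> simp
  | monomial m a ih =>
    simp only [map_mul, Polynomial.aeval_C, map_pow, Polynomial.aeval_X,
      MvPolynomial.algebraMap_eq, derivative_C_mul, derivative_X_pow]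
    rw [pderiv_C_mul, Derivation.leibniz_pow, pderiv_X]
    split_ifs with h
    · subst h
      simp only [smul_eq_mul, mul_one]
      rw [Pi.single_eq_same, nsmul_eq_mul,
        map_natCast (MvPolynomial.C : k →+* MvPolynomial (Fin (n+2)) k)]
      ring
    · rw [Pi.single_eq_of_ne (fun hh => h hh.symm)]
      simp

lemma psi_aeval (i : Fin (n+2)) (hi : i ≠ 0) (f : Polynomial k) :
    psi (Polynomial.aeval (X i : MvPolynomial (Fin (n+2)) k) f)
      = Polynomial.aeval (X i : MvPolynomial (Fin (n+2)) k) (Dt f) := by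
  unfold psi Dt
  rw [Finset.sum_congr rfl (fun j _ => by rw [pderiv_aeval i j f])]
  simp only [mul_ite, mul_zero]
  rw [Finset.sum_ite_eq' Finset.univ i]
  rw [if_pos (Finset.mem_univ i), if_neg hi]
  rw [map_mul, map_sub, map_pow, Polynomial.aeval_X]
  ring

lemma psi_iter_aeval (i : Fin (n+2)) (hi : i ≠ 0) (m : ℕ) (f : Polynomial k) :
    psi^[m] (Polynomial.aeval (X i : MvPolynomial (Fin (n+2)) k) f)
      = Polynomial.aeval (X i : MvPolynomial (Fin (n+2)) k) (Dt^[m] f) := by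
  induction m generalizing f with
  | zero => rfl
  | succ m IH =>
    rw [Function.iterate_succ_apply', Function.iterate_succ_apply', IH, psi_aeval i hi]

lemma psi_X (i : Fin (n+2)) :
    psi (X i : MvPolynomial (Fin (n+2)) k) = (if i = 0 then X i else -X i + X i ^ 2) := by
  unfold psi
  classical
  rw [Finset.sum_eq_single_of_mem i (Finset.mem_univ i)]
  · rw [pderiv_X_self, mul_one]
  · intro j _ hne
    rw [pderiv_X_of_ne (Ne.symm hne), mul_zero]

lemma psi_iter_X0 (m : ℕ) : psi^[m] (X 0 : MvPolynomial (Fin (n+2)) k) = X 0 := by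
  induction m with
  | zero => rfl
  | succ m IH => rw [Function.iterate_succ_apply, psi_X, if_pos rfl, IH]

end MV

open MvPolynomial

/-- Over a field `k` of characteristic `p > 0` and `n ≥ 2` (here
`n + 2` variables with `n : ℕ` arbitrary), the derivation
`ψ = u₁ ∂/∂u₁ + Σ_{i=2}^{n} (−uᵢ + uᵢ²) ∂/∂uᵢ` on `k[u₁,…,uₙ]` satisfies `ψ^[p] = ψ`. -/
theorem statement5 {k : Type*} [Field k] (p n : ℕ) [Fact p.Prime] [CharP k p]
    (f : MvPolynomial (Fin (n + 2)) k) :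
    (fun g : MvPolynomial (Fin (n + 2)) k =>
        ∑ i, (if i = 0 then X i else -X i + X i ^ 2) * pderiv i g)^[p] f
      = ∑ i, (if i = 0 then X i else -X i + X i ^ 2) * pderiv i f := by
  haveI : CharP (MvPolynomial (Fin (n+2)) k) p := charP_of_injective_algebraMap' k p
  have hppos : p ≠ 0 := Nat.Prime.ne_zero Fact.out
  show psi^[p] f = psi f
  have hXi : ∀ i : Fin (n+2), psi^[p] (X i : MvPolynomial (Fin (n+2)) k) = psi (X i) := by
    intro i
    by_cases hi : i = 0
    · subst hi
      rw [psi_iter_X0, psi_X, if_pos rfl]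
    · have h1 := psi_iter_aeval (k := k) i hi p Polynomial.X
      rw [Polynomial.aeval_X] at h1
      rw [h1, Dt_prime p, psi_X, if_neg hi, map_sub, map_pow, Polynomial.aeval_X]
      ring
  induction f using MvPolynomial.induction_on with
  | C a =>
    obtain ⟨m, rfl⟩ := Nat.exists_eq_succ_of_ne_zero hppos
    rw [Function.iterate_succ_apply, psi_C, psi_iter_zero]
  | add f g hf hg =>
    rw [psi_iter_add, hf, hg, psi_add]
  | mul_X q i hq =>
    rw [psi_iter_mul, Finset.sum_range_succ,
      Finset.sum_eq_single_of_mem 0 (Finset.mem_range.mpr (by omega))]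
    · rw [Nat.choose_zero_right, Nat.choose_self, Nat.sub_self, Nat.sub_zero,
        one_smul, one_smul, Function.iterate_zero_apply, Function.iterate_zero_apply,
        hq, hXi i, psi_mul]
      ring
    · intro j hj hj0
      have hjp : j < p := Finset.mem_range.mp hj
      have hz : ((p.choose j : ℕ) : MvPolynomial (Fin (n+2)) k) = 0 := by
        rw [CharP.cast_eq_zero_iff _ p]
        exact Nat.Prime.dvd_choose_self Fact.out hj0 hjp
      rw [nsmul_eq_mul, hz, zero_mul]
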